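/- For every ε > 0 there exists a positive integer m with the following property: for every graph G on n ≥ m vertices that is ε-far from being bipartite (i.e. at least ε·n² edge deletions are needed to make G bipartite), at least (1 − ε/2)·C(n,m) of the m-element vertex subsets of G induce a non-bipartite subgraph. -/

import Mathlib

open Finset
open scoped Classical

variable {V : Type*}

/-- A triangle packing of `G`: a finite collection of triangles (3-cliques) of `G` that are
pairwise edge-disjoint (i.e. any two distinct members share at most one vertex). -/
def SimpleGraph.IsTrianglePacking [DecidableEq V] (G : SimpleGraph V)
    (P : Finset (Finset V)) : Prop :=
  (∀ T ∈ P, G.IsNClique 3 T) ∧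
    (P : Set (Finset V)).Pairwise fun S T => (S ∩ T).card ≤ 1

/-- The maximum size (number of edges, i.e. `3 * number of triangles`) of a triangle packing. -/
noncomputable def SimpleGraph.triangleNu [DecidableEq V] (G : SimpleGraph V) : ℕ :=
  sSup {m | ∃ P : Finset (Finset V), G.IsTrianglePacking P ∧ m = 3 * P.card}

/-- A fractional triangle packing of `G`: a weight function on triples of vertices, supported
on triangles of `G`, with values in `[0,1]`, such that every edge carries total weight ≤ 1. -/
def SimpleGraph.IsFracTrianglePacking [Fintype V] [DecidableEq V] (G : SimpleGraph V)
    (w : Finset V → ℝ) : Prop :=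
  (∀ T, 0 ≤ w T ∧ w T ≤ 1) ∧
  (∀ T, ¬ G.IsNClique 3 T → w T = 0) ∧
  ∀ u v : V, G.Adj u v →
    ∑ T ∈ univ.filter (fun T : Finset V => G.IsNClique 3 T ∧ u ∈ T ∧ v ∈ T), w T ≤ 1

/-- `ν*(G)`: the maximum size `3 ∑ w(T)` of a fractional triangle packing of `G`. -/
noncomputable def SimpleGraph.nuStar [Fintype V] [DecidableEq V] (G : SimpleGraph V) : ℝ :=
  sSup {x | ∃ w : Finset V → ℝ, G.IsFracTrianglePacking w ∧ x = 3 * ∑ T : Finset V, w T}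

/-- `η(G) = ν*(G)/(n(n-1))` where `n = |V(G)|`. -/
noncomputable def SimpleGraph.etaPack [Fintype V] [DecidableEq V] (G : SimpleGraph V) : ℝ :=
  G.nuStar / ((Fintype.card V : ℝ) * ((Fintype.card V : ℝ) - 1))

/-- A fractional triangle decomposition: a fractional packing with equality on every edge. -/
def SimpleGraph.IsFracTriangleDecomposition [Fintype V] [DecidableEq V] (G : SimpleGraph V)
    (w : Finset V → ℝ) : Prop :=
  G.IsFracTrianglePacking w ∧
  ∀ u v : V, G.Adj u v →
    ∑ T ∈ univ.filter (fun T : Finset V => G.IsNClique 3 T ∧ u ∈ T ∧ v ∈ T), w T = 1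

/-- `G` is `ε`-far from bipartite: every bipartite subgraph misses at least `ε n²` edges. -/
def FarFromBipartite [Fintype V] [DecidableEq V] (ε : ℝ) (G : SimpleGraph V) : Prop :=
  ∀ H : SimpleGraph V, H ≤ G → H.Colorable 2 →
    ε * (Fintype.card V : ℝ) ^ 2 ≤ (G.edgeFinset.card : ℝ) - (H.edgeFinset.card : ℝ)

/-- The disjoint union of two cliques on `⌈n/2⌉`-ish halves of `Fin n`
(the first `n/2` vertices form one clique, the rest form the other). -/
def twoCliques (n : ℕ) : SimpleGraph (Fin n) where
  Adj u v := u ≠ v ∧ ((u : ℕ) < n / 2 ↔ (v : ℕ) < n / 2)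
  symm := ⟨fun u v h => ⟨h.1.symm, h.2.symm⟩⟩
  loopless := ⟨fun u h => h.1 rfl⟩

/-- `g(n)`: minimum over co-triangle-free `n`-vertex graphs of the max triangle packing size. -/
noncomputable def gInt (n : ℕ) : ℕ :=
  sInf {m | ∃ G : SimpleGraph (Fin n), Gᶜ.CliqueFree 3 ∧ m = G.triangleNu}

/-- `g*(n)`: minimum over co-triangle-free `n`-vertex graphs of `ν*`. -/
noncomputable def gStar (n : ℕ) : ℝ :=
  sInf {x | ∃ G : SimpleGraph (Fin n), Gᶜ.CliqueFree 3 ∧ x = G.nuStar}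


namespace Stmt13Aux

variable {V : Type*} [Fintype V] [DecidableEq V]

/-- ordered monochromatic adjacent pairs -/
noncomputable def monoPairs (G : SimpleGraph V) (C : V → Bool) : Finset (V × V) :=
  univ.filter fun yz => G.Adj yz.1 yz.2 ∧ C yz.1 = C yz.2

lemma mono_lower {ε : ℝ} (G : SimpleGraph V) (hfar : FarFromBipartite ε G) (C : V → Bool) :
    2 * (ε * (Fintype.card V : ℝ) ^ 2) ≤ ((monoPairs G C).card : ℝ) := by
  classical
  set Gsame : SimpleGraph V :=
    { Adj := fun y z => G.Adj y z ∧ C y = C z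
      symm := ⟨fun y z h => ⟨h.1.symm, h.2.symm⟩⟩
      loopless := ⟨fun y h => G.loopless.irrefl y h.1⟩ } with hGsame
  set Gdiff : SimpleGraph V :=
    { Adj := fun y z => G.Adj y z ∧ C y ≠ C z
      symm := ⟨fun y z h => ⟨h.1.symm, Ne.symm h.2⟩⟩
      loopless := ⟨fun y h => G.loopless.irrefl y h.1⟩ } with hGdiff
  have hle : Gdiff ≤ G := fun y z h => h.1
  have hcol : Gdiff.Colorable 2 := by
    refine ⟨SimpleGraph.Coloring.mk (fun v => if C v then 1 else 0) ?_⟩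
    intro y z hadj
    rcases hadj with ⟨-, hne⟩
    cases hy : C y <;> cases hz : C z <;> simp_all
  have hfar' := hfar Gdiff hle hcol
  simp only [SimpleGraph.edgeFinset, Set.toFinset_card, ← Nat.card_eq_fintype_card] at hfar'
  -- card of monoPairs equals 2 * edge count of Gsame
  have hcard : (monoPairs G C).card = 2 * Gsame.edgeFinset.card := by
    rw [← SimpleGraph.dart_card_eq_twice_card_edges]
    have : Fintype.card Gsame.Dart =
        Fintype.card {p : V × V // G.Adj p.1 p.2 ∧ C p.1 = C p.2} := by
      refine Fintype.card_congr ⟨fun d => ⟨d.toProd, d.adj⟩, fun p => SimpleGraph.Dart.mk p.1 p.2,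
        fun d => by cases d; rfl, fun p => by cases p; rfl⟩
    rw [this, Fintype.card_subtype]
    rfl
  -- partition of edges
  have hsub : Gsame.edgeFinset ⊆ G.edgeFinset := by
    intro e he
    rw [SimpleGraph.mem_edgeFinset] at he ⊢
    induction e with
    | _ y z => exact (he : Gsame.Adj y z).1
  have hdisj : Disjoint Gsame.edgeFinset Gdiff.edgeFinset := by
    rw [Finset.disjoint_left]
    intro e he he'
    rw [SimpleGraph.mem_edgeFinset] at he he'
    induction e with
    | _ y z => exact (he' : Gdiff.Adj y z).2 (he : Gsame.Adj y z).2
  have hunion : G.edgeFinset = Gsame.edgeFinset ∪ Gdiff.edgeFinset := by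
    apply Finset.ext
    intro e
    simp only [Finset.mem_union, SimpleGraph.mem_edgeFinset]
    induction e with
    | _ y z =>
      constructor
      · intro h
        by_cases hc : C y = C z
        · exact Or.inl ⟨h, hc⟩
        · exact Or.inr ⟨h, hc⟩
      · rintro (h | h) <;> exact h.1
  have hcards : G.edgeFinset.card = Gsame.edgeFinset.card + Gdiff.edgeFinset.card := by
    rw [hunion, Finset.card_union_of_disjoint hdisj]
  simp only [SimpleGraph.edgeFinset, Set.toFinset_card, ← Nat.card_eq_fintype_card] at hcards hcard
  have hc2 : (Nat.card ↑G.edgeSet : ℝ) =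
      (Nat.card ↑Gsame.edgeSet : ℝ) + (Nat.card ↑Gdiff.edgeSet : ℝ) := by
    exact_mod_cast congrArg (Nat.cast : ℕ → ℝ) hcards
  rw [show (Fintype.card V : ℝ) = (Nat.card V : ℝ) by rw [Nat.card_eq_fintype_card], hcard]
  push_cast
  linarith


variable (G : SimpleGraph V)

def covered {a : ℕ} (α : Fin a → V) (v : V) : Prop := ∃ i, G.Adj (α i) v

noncomputable def CExt {a : ℕ} (α : Fin a → V) (χ : Fin a → Bool) (v : V) : Bool :=
  if h : (univ.filter fun i => G.Adj (α i) v).Nonempty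
  then !(χ ((univ.filter fun i => G.Adj (α i) v).min' h)) else false

lemma covered_iff {a : ℕ} (α : Fin a → V) (v : V) :
    covered G α v ↔ (univ.filter fun i => G.Adj (α i) v).Nonempty := by
  simp [covered, Finset.filter_nonempty_iff]

lemma CExt_spec {a : ℕ} (α : Fin a → V) (χ : Fin a → Bool) (v : V) (h : covered G α v) :
    ∃ i, G.Adj (α i) v ∧ CExt G α χ v = !(χ i) := by
  rw [covered_iff] at h
  refine ⟨(univ.filter fun i => G.Adj (α i) v).min' h, ?_, ?_⟩
  · have := Finset.min'_mem _ h
    simpa using this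
  · simp [CExt, dif_pos h]

noncomputable def Uset (ε : ℝ) {a : ℕ} (α : Fin a → V) : Finset V :=
  univ.filter fun v =>
    (ε * (Fintype.card V : ℝ) / 2 ≤ (G.degree v : ℝ)) ∧ ¬ covered G α v

noncomputable def badA (ε : ℝ) (a : ℕ) : Finset (Fin a → V) :=
  univ.filter fun α => ε * (Fintype.card V : ℝ) / 4 ≤ ((Uset G ε α).card : ℝ)

lemma badA_card_le (ε : ℝ) (a : ℕ) (hε0 : 0 < ε) (hε2 : ε ≤ 1/2)
    (hn : 0 < Fintype.card V) :
    ((badA G ε a).card : ℝ) ≤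
      (4/ε) * (1 - ε/2)^a * (Fintype.card V : ℝ)^a := by
  classical
  set n := Fintype.card V with hn'
  -- swap the double count
  have swap : ∑ α : Fin a → V, ((Uset G ε α).card) =
      ∑ v : V, ((univ : Finset (Fin a → V)).filter (fun α => v ∈ Uset G ε α)).card := by
    simp only [Uset, Finset.card_filter, Finset.mem_filter, Finset.mem_univ, true_and]
    rw [Finset.sum_comm]
  have hcount : ∀ v : V, (((univ : Finset (Fin a → V)).filter
      (fun α => v ∈ Uset G ε α)).card : ℝ) ≤ ((1 - ε/2) * n)^a := by
    intro v
    by_cases hhi : ε * (n : ℝ) / 2 ≤ (G.degree v : ℝ)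
    · have hsub : ((univ : Finset (Fin a → V)).filter (fun α => v ∈ Uset G ε α)) ⊆
          Fintype.piFinset (fun _ : Fin a => univ \ G.neighborFinset v) := by
        intro α hα
        rw [Finset.mem_filter] at hα
        rw [Fintype.mem_piFinset]
        intro i
        rw [Finset.mem_sdiff]
        refine ⟨Finset.mem_univ _, ?_⟩
        intro hmem
        have hcov : covered G α v := ⟨i, ((SimpleGraph.mem_neighborFinset _ _ _).mp hmem).symm⟩
        have := (Finset.mem_filter.mp hα.2).2.2
        exact this hcov
      have hcard := Finset.card_le_card hsub
      have hpi : (Fintype.piFinset (fun _ : Fin a => univ \ G.neighborFinset v)).card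
          = (n - G.degree v)^a := by
        rw [Fintype.card_piFinset]
        simp only [Finset.card_sdiff_of_subset (Finset.subset_univ _), Finset.card_univ,
          SimpleGraph.card_neighborFinset_eq_degree, Finset.prod_const, Fintype.card_fin]
        rfl
      have hdege : (G.degree v) ≤ n := by
        rw [hn']; exact (G.neighborFinset v).card_le_univ.trans_eq Finset.card_univ
      have h1 : ((n - G.degree v : ℕ) : ℝ) ≤ (1 - ε/2) * n := by
        rw [Nat.cast_sub hdege]
        have : ε * (n:ℝ)/2 ≤ (G.degree v : ℝ) := hhi
        nlinarith [this]
      calc (((univ : Finset (Fin a → V)).filter (fun α => v ∈ Uset G ε α)).card : ℝ)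
          ≤ ((n - G.degree v : ℕ)^a : ℝ) := by exact_mod_cast (hcard.trans_eq hpi)
        _ ≤ ((1 - ε/2) * n)^a := by
            push_cast
            exact pow_le_pow_left₀ (by positivity) h1 a
    · have : ((univ : Finset (Fin a → V)).filter (fun α => v ∈ Uset G ε α)) = ∅ := by
        apply Finset.filter_false_of_mem
        intro α _
        intro hmem
        exact hhi (Finset.mem_filter.mp hmem).2.1
      rw [this]
      simp only [Finset.card_empty, Nat.cast_zero]
      have hnn : (0:ℝ) ≤ (1 - ε/2) * n := mul_nonneg (by linarith) (by positivity)
      positivity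
  -- lower bound for the sum restricted to badA
  have hlow : ((badA G ε a).card : ℝ) * (ε * n / 4) ≤
      ∑ α : Fin a → V, (((Uset G ε α).card : ℕ) : ℝ) := by
    have h1 : ∀ α ∈ badA G ε a, (ε * (n:ℝ)/4) ≤ ((Uset G ε α).card : ℝ) := by
      intro α hα; exact (Finset.mem_filter.mp hα).2
    calc ((badA G ε a).card : ℝ) * (ε * n / 4)
        = ∑ _α ∈ badA G ε a, (ε * (n:ℝ)/4) := by rw [Finset.sum_const, nsmul_eq_mul]; try ring
      _ ≤ ∑ α ∈ badA G ε a, ((Uset G ε α).card : ℝ) := Finset.sum_le_sum h1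
      _ ≤ ∑ α : Fin a → V, ((Uset G ε α).card : ℝ) :=
          Finset.sum_le_sum_of_subset_of_nonneg (Finset.subset_univ _)
            (fun _ _ _ => by positivity)
  have hup : ∑ α : Fin a → V, (((Uset G ε α).card : ℕ) : ℝ) ≤ (n : ℝ) * ((1 - ε/2) * n)^a := by
    have := congrArg (Nat.cast : ℕ → ℝ) swap
    push_cast at this
    rw [this]
    calc ∑ v : V, ((((univ : Finset (Fin a → V)).filter (fun α => v ∈ Uset G ε α)).card : ℕ) : ℝ)
        ≤ ∑ _v : V, ((1 - ε/2) * n)^a := Finset.sum_le_sum (fun v _ => hcount v)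
      _ = (n : ℝ) * ((1 - ε/2) * n)^a := by rw [Finset.sum_const, Finset.card_univ, nsmul_eq_mul]
  have hεn : (0:ℝ) < ε * (n:ℝ) / 4 := by
    have : (0:ℝ) < n := by exact_mod_cast hn
    positivity
  have hfin := hlow.trans hup
  have h2 : ((badA G ε a).card : ℝ) ≤ ((n:ℝ) * ((1 - ε/2) * n)^a)/(ε * n / 4) :=
    (le_div_iff₀ hεn).mpr hfin
  refine h2.trans (le_of_eq ?_)
  have hne : (n:ℝ) ≠ 0 := by positivity
  rw [mul_pow]
  field_simp


noncomputable def Spairs {a : ℕ} (α : Fin a → V) (χ : Fin a → Bool) : Finset (V × V) :=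
  univ.filter fun yz => G.Adj yz.1 yz.2 ∧ covered G α yz.1 ∧ covered G α yz.2 ∧
    CExt G α χ yz.1 = CExt G α χ yz.2

lemma Spairs_lower {ε : ℝ} (hε0 : 0 < ε) (hfar : FarFromBipartite ε G)
    {a : ℕ} (α : Fin a → V) (hα : α ∉ badA G ε a) (χ : Fin a → Bool) :
    ε/2 * (Fintype.card V : ℝ)^2 ≤ ((Spairs G α χ).card : ℝ) := by
  classical
  set n := Fintype.card V with hn'
  set C := CExt G α χ with hC
  have hmono := mono_lower G hfar C
  set L : Finset V := univ.filter (fun y : V => (G.degree y : ℝ) < ε * n / 2) with hL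
  set B1 : Finset (V × V) := L.biUnion (fun y => {y} ×ˢ G.neighborFinset y) with hB1d
  set B2 : Finset (V × V) := L.biUnion (fun z => (G.neighborFinset z) ×ˢ {z}) with hB2d
  set B3 : Finset (V × V) := (Uset G ε α) ×ˢ univ with hB3d
  set B4 : Finset (V × V) := univ ×ˢ (Uset G ε α) with hB4d
  have hsub : monoPairs G C ⊆ ((((Spairs G α χ) ∪ B1) ∪ B2) ∪ B3) ∪ B4 := by
    intro yz hyz
    rw [monoPairs, Finset.mem_filter] at hyz
    obtain ⟨-, hadj, hCeq⟩ := hyz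
    simp only [Finset.mem_union]
    by_cases h1 : (G.degree yz.1 : ℝ) < ε * n / 2
    · refine Or.inl (Or.inl (Or.inl (Or.inr ?_)))
      rw [hB1d, Finset.mem_biUnion]
      exact ⟨yz.1, Finset.mem_filter.mpr ⟨Finset.mem_univ _, h1⟩,
        Finset.mem_product.mpr ⟨Finset.mem_singleton_self _,
          (SimpleGraph.mem_neighborFinset _ _ _).mpr hadj⟩⟩
    by_cases h2 : (G.degree yz.2 : ℝ) < ε * n / 2
    · refine Or.inl (Or.inl (Or.inr ?_))
      rw [hB2d, Finset.mem_biUnion]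
      exact ⟨yz.2, Finset.mem_filter.mpr ⟨Finset.mem_univ _, h2⟩,
        Finset.mem_product.mpr ⟨(SimpleGraph.mem_neighborFinset _ _ _).mpr hadj.symm,
          Finset.mem_singleton_self _⟩⟩
    by_cases h3 : covered G α yz.1
    · by_cases h4 : covered G α yz.2
      · refine Or.inl (Or.inl (Or.inl (Or.inl ?_)))
        rw [Spairs, Finset.mem_filter]
        exact ⟨Finset.mem_univ _, hadj, h3, h4, hCeq⟩
      · refine Or.inr ?_
        rw [hB4d, Finset.mem_product]
        exact ⟨Finset.mem_univ _, Finset.mem_filter.mpr ⟨Finset.mem_univ _, not_lt.mp h2, h4⟩⟩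
    · refine Or.inl (Or.inr ?_)
      rw [hB3d, Finset.mem_product]
      exact ⟨Finset.mem_filter.mpr ⟨Finset.mem_univ _, not_lt.mp h1, h3⟩, Finset.mem_univ _⟩
  have hnn : (0:ℝ) ≤ (n:ℝ) := by positivity
  have hεn2 : (0:ℝ) ≤ ε * n / 2 := by positivity
  have hB1c : (B1.card : ℝ) ≤ (n:ℝ) * (ε * n / 2) := by
    have h0 : B1.card ≤ ∑ y ∈ L, ({y} ×ˢ G.neighborFinset y).card := Finset.card_biUnion_le
    have h1 : ∀ y ∈ L, (({y} ×ˢ G.neighborFinset y).card : ℝ) ≤ ε * n / 2 := by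
      intro y hy
      rw [Finset.card_product, Finset.card_singleton, one_mul,
        SimpleGraph.card_neighborFinset_eq_degree]
      exact le_of_lt (Finset.mem_filter.mp hy).2
    calc (B1.card : ℝ) ≤ ∑ y ∈ L, (({y} ×ˢ G.neighborFinset y).card : ℝ) := by exact_mod_cast h0
      _ ≤ ∑ _y ∈ L, (ε * (n:ℝ) / 2) := Finset.sum_le_sum h1
      _ = (L.card : ℝ) * (ε * n / 2) := by rw [Finset.sum_const, nsmul_eq_mul]
      _ ≤ (n:ℝ) * (ε * n / 2) := by
          have : (L.card : ℝ) ≤ (n : ℝ) := by exact_mod_cast (Finset.card_le_univ L).trans_eq Finset.card_univ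
          exact mul_le_mul_of_nonneg_right this hεn2
  have hB2c : (B2.card : ℝ) ≤ (n:ℝ) * (ε * n / 2) := by
    have h0 : B2.card ≤ ∑ y ∈ L, ((G.neighborFinset y) ×ˢ {y}).card := Finset.card_biUnion_le
    have h1 : ∀ y ∈ L, (((G.neighborFinset y) ×ˢ {y}).card : ℝ) ≤ ε * n / 2 := by
      intro y hy
      rw [Finset.card_product, Finset.card_singleton, mul_one,
        SimpleGraph.card_neighborFinset_eq_degree]
      exact le_of_lt (Finset.mem_filter.mp hy).2
    calc (B2.card : ℝ) ≤ ∑ y ∈ L, (((G.neighborFinset y) ×ˢ {y}).card : ℝ) := by exact_mod_cast h0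
      _ ≤ ∑ _y ∈ L, (ε * (n:ℝ) / 2) := Finset.sum_le_sum h1
      _ = (L.card : ℝ) * (ε * n / 2) := by rw [Finset.sum_const, nsmul_eq_mul]
      _ ≤ (n:ℝ) * (ε * n / 2) := by
          have : (L.card : ℝ) ≤ (n : ℝ) := by exact_mod_cast (Finset.card_le_univ L).trans_eq Finset.card_univ
          exact mul_le_mul_of_nonneg_right this hεn2
  have hU : ((Uset G ε α).card : ℝ) ≤ ε * n / 4 := by
    rw [badA, Finset.mem_filter] at hα
    push_neg at hα
    exact le_of_lt (hα (Finset.mem_univ _))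
  have hB3c : (B3.card : ℝ) ≤ (ε * n / 4) * n := by
    rw [hB3d, Finset.card_product, Finset.card_univ, ← hn']
    push_cast
    exact mul_le_mul_of_nonneg_right hU hnn
  have hB4c : (B4.card : ℝ) ≤ (n:ℝ) * (ε * n / 4) := by
    rw [hB4d, Finset.card_product, Finset.card_univ, ← hn']
    push_cast
    exact mul_le_mul_of_nonneg_left hU hnn
  have htot : ((monoPairs G C).card : ℝ) ≤ (Spairs G α χ).card + B1.card + B2.card + B3.card + B4.card := by
    have h := Finset.card_le_card hsub
    calc ((monoPairs G C).card : ℝ) ≤ ((((((Spairs G α χ) ∪ B1) ∪ B2) ∪ B3) ∪ B4).card : ℝ) := by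
          exact_mod_cast h
      _ ≤ ((Spairs G α χ).card : ℝ) + B1.card + B2.card + B3.card + B4.card := by
          have c1 := Finset.card_union_le ((((Spairs G α χ) ∪ B1) ∪ B2) ∪ B3) B4
          have c2 := Finset.card_union_le (((Spairs G α χ) ∪ B1) ∪ B2) B3
          have c3 := Finset.card_union_le ((Spairs G α χ) ∪ B1) B2
          have c4 := Finset.card_union_le (Spairs G α χ) B1
          have : ((((((Spairs G α χ) ∪ B1) ∪ B2) ∪ B3) ∪ B4).card : ℕ) ≤
              (Spairs G α χ).card + B1.card + B2.card + B3.card + B4.card := by omega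
          exact_mod_cast this
  linarith [hmono, hB1c, hB2c, hB3c, hB4c, htot]


def imgP {a b : ℕ} (p : (Fin a → V) × (Fin b → V × V)) : Finset V :=
  (Finset.image p.1 univ) ∪ (Finset.image (fun j => (p.2 j).1) univ) ∪
    (Finset.image (fun j => (p.2 j).2) univ)

lemma mem_imgP_fst {a b : ℕ} (p : (Fin a → V) × (Fin b → V × V)) (i : Fin a) :
    p.1 i ∈ imgP p := by
  simp only [imgP, Finset.mem_union, Finset.mem_image]
  exact Or.inl (Or.inl ⟨i, Finset.mem_univ _, rfl⟩)

lemma mem_imgP_pair1 {a b : ℕ} (p : (Fin a → V) × (Fin b → V × V)) (j : Fin b) :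
    (p.2 j).1 ∈ imgP p := by
  simp only [imgP, Finset.mem_union, Finset.mem_image]
  exact Or.inl (Or.inr ⟨j, Finset.mem_univ _, rfl⟩)

lemma mem_imgP_pair2 {a b : ℕ} (p : (Fin a → V) × (Fin b → V × V)) (j : Fin b) :
    (p.2 j).2 ∈ imgP p := by
  simp only [imgP, Finset.mem_union, Finset.mem_image]
  exact Or.inr ⟨j, Finset.mem_univ _, rfl⟩

lemma exists_chi {a b : ℕ} (p : (Fin a → V) × (Fin b → V × V))
    (hcol : (G.induce ((imgP p : Finset V) : Set V)).Colorable 2) :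
    ∃ χ : Fin a → Bool, ∀ j : Fin b, p.2 j ∉ Spairs G p.1 χ := by
  classical
  obtain ⟨c⟩ := hcol
  have hfact1 : ∀ x y : Fin 2, x ≠ y → (!decide (x = 1)) = decide (y = 1) := by decide
  have hfact2 : ∀ x y : Fin 2, decide (x = 1) = decide (y = 1) → x = y := by decide
  set S : Set V := ((imgP p : Finset V) : Set V) with hS
  have hmem : ∀ v, v ∈ imgP p → v ∈ S := fun v hv => Finset.mem_coe.mpr hv
  refine ⟨fun i => decide ((c ⟨p.1 i, hmem _ (mem_imgP_fst p i)⟩ : Fin 2) = 1), fun j hj => ?_⟩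
  rw [Spairs, Finset.mem_filter] at hj
  obtain ⟨-, hadj, hcov1, hcov2, hCeq⟩ := hj
  have key : ∀ (v : V) (hv : v ∈ S), covered G p.1 v →
      CExt G p.1 (fun i => decide ((c ⟨p.1 i, hmem _ (mem_imgP_fst p i)⟩ : Fin 2) = 1)) v
        = decide ((c ⟨v, hv⟩ : Fin 2) = 1) := by
    intro v hv hcov
    obtain ⟨i, hadj', hCe⟩ := CExt_spec G p.1 _ v hcov
    rw [hCe]
    apply hfact1
    apply c.valid
    exact hadj'
  have h1 := key _ (hmem _ (mem_imgP_pair1 p j)) hcov1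
  have h2 := key _ (hmem _ (mem_imgP_pair2 p j)) hcov2
  rw [h1, h2] at hCeq
  have hadjI : (G.induce S).Adj ⟨(p.2 j).1, hmem _ (mem_imgP_pair1 p j)⟩
      ⟨(p.2 j).2, hmem _ (mem_imgP_pair2 p j)⟩ := by
    simpa using hadj
  exact (c.valid hadjI) (hfact2 _ _ hCeq)


noncomputable def badP (a b : ℕ) : Finset ((Fin a → V) × (Fin b → V × V)) :=
  univ.filter fun p => (G.induce ((imgP p : Finset V) : Set V)).Colorable 2

lemma badP_card_le {ε : ℝ} (hε0 : 0 < ε) (hε2 : ε ≤ 1/2) (hfar : FarFromBipartite ε G)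
    (hn : 0 < Fintype.card V) (a b : ℕ)
    (ha : (4/ε) * (1 - ε/2)^a ≤ ε/8) (hb : (2:ℝ)^a * (1 - ε/2)^b ≤ ε/8) :
    ((badP G a b).card : ℝ) ≤ (ε/4) * (Fintype.card V : ℝ)^(a + 2*b) := by
  classical
  set n := Fintype.card V with hn'
  set E2 : (Fin a → Bool) → Finset ((Fin a → V) × (Fin b → V × V)) :=
    fun χ => univ.filter (fun p => p.1 ∉ badA G ε a ∧ ∀ j, p.2 j ∉ Spairs G p.1 χ) with hE2
  have hsplit : badP G a b ⊆ ((badA G ε a) ×ˢ (univ : Finset (Fin b → V × V))) ∪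
      (univ : Finset (Fin a → Bool)).biUnion E2 := by
    intro p hp
    rw [badP, Finset.mem_filter] at hp
    rw [Finset.mem_union]
    by_cases hbad : p.1 ∈ badA G ε a
    · exact Or.inl (Finset.mem_product.mpr ⟨hbad, Finset.mem_univ _⟩)
    · obtain ⟨χ, hχ⟩ := exists_chi G p hp.2
      refine Or.inr (Finset.mem_biUnion.mpr ⟨χ, Finset.mem_univ _, ?_⟩)
      rw [hE2]
      exact Finset.mem_filter.mpr ⟨Finset.mem_univ _, hbad, hχ⟩
  -- bound each E2 χ
  have hE2card : ∀ χ : Fin a → Bool,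
      ((E2 χ).card : ℝ) ≤ (n:ℝ)^a * ((1 - ε/2) * (n:ℝ)^2)^b := by
    intro χ
    have hsub2 : E2 χ ⊆ (univ : Finset (Fin a → V)).biUnion (fun α =>
        if α ∈ badA G ε a then ∅ else
          {α} ×ˢ Fintype.piFinset (fun _ : Fin b => univ \ Spairs G α χ)) := by
      intro p hp
      rw [hE2, Finset.mem_filter] at hp
      obtain ⟨-, hgood, hav⟩ := hp
      refine Finset.mem_biUnion.mpr ⟨p.1, Finset.mem_univ _, ?_⟩
      rw [if_neg hgood]
      refine Finset.mem_product.mpr ⟨Finset.mem_singleton_self _, ?_⟩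
      rw [Fintype.mem_piFinset]
      intro j
      rw [Finset.mem_sdiff]
      exact ⟨Finset.mem_univ _, hav j⟩
    have h0 := (Finset.card_le_card hsub2).trans Finset.card_biUnion_le
    have hterm : ∀ α : Fin a → V,
        (((if α ∈ badA G ε a then (∅ : Finset ((Fin a → V) × (Fin b → V × V))) else
          {α} ×ˢ Fintype.piFinset (fun _ : Fin b => univ \ Spairs G α χ)).card : ℕ) : ℝ)
          ≤ ((1 - ε/2) * (n:ℝ)^2)^b := by
      intro α
      by_cases hbad : α ∈ badA G ε a
      · rw [if_pos hbad]
        simp only [Finset.card_empty, Nat.cast_zero]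
        have : (0:ℝ) ≤ (1 - ε/2) * (n:ℝ)^2 := mul_nonneg (by linarith) (by positivity)
        positivity
      · rw [if_neg hbad]
        rw [Finset.card_product, Finset.card_singleton, one_mul, Fintype.card_piFinset]
        rw [Finset.prod_const, Finset.card_univ, Fintype.card_fin]
        have hcardsd : ((univ \ Spairs G α χ).card : ℝ) ≤ (1 - ε/2) * (n:ℝ)^2 := by
          rw [Finset.card_sdiff_of_subset (Finset.subset_univ _), Finset.card_univ, Fintype.card_prod]
          have hS := Spairs_lower G hε0 hfar α hbad χ
          have hSle : (Spairs G α χ).card ≤ n * n := by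
            have := Finset.card_le_univ (Spairs G α χ)
            simpa [Finset.card_univ, hn'] using this
          rw [Nat.cast_sub hSle]
          push_cast
          nlinarith [hS]
        calc (((univ \ Spairs G α χ).card ^ b : ℕ) : ℝ)
            = (((univ \ Spairs G α χ).card : ℝ))^b := by push_cast; ring
          _ ≤ ((1 - ε/2) * (n:ℝ)^2)^b := pow_le_pow_left₀ (by positivity) hcardsd b
    calc ((E2 χ).card : ℝ) ≤ ((∑ α : Fin a → V,
          (if α ∈ badA G ε a then (∅ : Finset ((Fin a → V) × (Fin b → V × V))) else
          {α} ×ˢ Fintype.piFinset (fun _ : Fin b => univ \ Spairs G α χ)).card : ℕ) : ℝ) := by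
          exact_mod_cast h0
      _ ≤ ∑ _α : Fin a → V, ((1 - ε/2) * (n:ℝ)^2)^b := by
          push_cast
          exact Finset.sum_le_sum (fun α _ => hterm α)
      _ = (n:ℝ)^a * ((1 - ε/2) * (n:ℝ)^2)^b := by
          rw [Finset.sum_const, Finset.card_univ, Fintype.card_fun, Fintype.card_fin,
            nsmul_eq_mul]
          push_cast
          ring
  -- assemble
  have hprod : (((badA G ε a) ×ˢ (univ : Finset (Fin b → V × V))).card : ℝ) ≤
      (ε/8) * (n:ℝ)^a * ((n:ℝ)^2)^b := by
    rw [Finset.card_product, Finset.card_univ, Fintype.card_fun, Fintype.card_prod,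
      Fintype.card_fin]
    push_cast
    have h1 := badA_card_le G ε a hε0 hε2 hn
    have h2 : ((n*n)^b : ℝ) = ((n:ℝ)^2)^b := by ring
    have hnn : (0:ℝ) ≤ ((n:ℝ)*(n:ℝ))^b := by positivity
    calc ((badA G ε a).card : ℝ) * ((n:ℝ)*(n:ℝ))^b
        ≤ ((4/ε) * (1 - ε/2)^a * (n:ℝ)^a) * ((n:ℝ)*(n:ℝ))^b := by
          exact mul_le_mul_of_nonneg_right h1 hnn
      _ ≤ ((ε/8) * (n:ℝ)^a) * ((n:ℝ)*(n:ℝ))^b := by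
          have : (4/ε) * (1 - ε/2)^a * (n:ℝ)^a ≤ (ε/8) * (n:ℝ)^a :=
            mul_le_mul_of_nonneg_right ha (by positivity)
          exact mul_le_mul_of_nonneg_right this hnn
      _ = (ε/8) * (n:ℝ)^a * ((n:ℝ)^2)^b := by ring
  have hbiU : (((univ : Finset (Fin a → Bool)).biUnion E2).card : ℝ) ≤
      (ε/8) * (n:ℝ)^a * ((n:ℝ)^2)^b := by
    have h0 : ((univ : Finset (Fin a → Bool)).biUnion E2).card ≤
        ∑ χ : Fin a → Bool, (E2 χ).card := Finset.card_biUnion_le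
    calc (((univ : Finset (Fin a → Bool)).biUnion E2).card : ℝ)
        ≤ ∑ χ : Fin a → Bool, ((E2 χ).card : ℝ) := by exact_mod_cast h0
      _ ≤ ∑ _χ : Fin a → Bool, (n:ℝ)^a * ((1 - ε/2) * (n:ℝ)^2)^b :=
          Finset.sum_le_sum (fun χ _ => hE2card χ)
      _ = (2:ℝ)^a * ((n:ℝ)^a * ((1 - ε/2) * (n:ℝ)^2)^b) := by
          rw [Finset.sum_const, Finset.card_univ, Fintype.card_fun, Fintype.card_fin,
            Fintype.card_bool, nsmul_eq_mul]
          push_cast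
          ring
      _ = ((2:ℝ)^a * (1 - ε/2)^b) * ((n:ℝ)^a * ((n:ℝ)^2)^b) := by
          rw [mul_pow]
          ring
      _ ≤ (ε/8) * ((n:ℝ)^a * ((n:ℝ)^2)^b) := by
          refine mul_le_mul_of_nonneg_right hb (by positivity)
      _ = (ε/8) * (n:ℝ)^a * ((n:ℝ)^2)^b := by ring
  have hfin := (Finset.card_le_card hsplit).trans (Finset.card_union_le _ _)
  have : ((badP G a b).card : ℝ) ≤
      (((badA G ε a) ×ˢ (univ : Finset (Fin b → V × V))).card : ℝ) +
        (((univ : Finset (Fin a → Bool)).biUnion E2).card : ℝ) := by exact_mod_cast hfin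
  calc ((badP G a b).card : ℝ) ≤ (ε/8) * (n:ℝ)^a * ((n:ℝ)^2)^b + (ε/8) * (n:ℝ)^a * ((n:ℝ)^2)^b := by
        linarith [hprod, hbiU]
    _ = (ε/4) * ((n:ℝ)^a * ((n:ℝ)^2)^b) := by ring
    _ = (ε/4) * (n:ℝ)^(a + 2*b) := by rw [← pow_mul, ← pow_add]


lemma induce_colorable_mono {S T : Finset V} (hST : S ⊆ T)
    (h : (G.induce (T : Set V)).Colorable 2) : (G.induce (S : Set V)).Colorable 2 := by
  obtain ⟨c⟩ := h
  refine ⟨SimpleGraph.Coloring.mk (fun v => c ⟨v.1, hST v.2⟩) ?_⟩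
  intro u v hadj
  exact c.valid (by simpa using hadj)

noncomputable def badM (m : ℕ) : Finset (Finset V) :=
  (Finset.powersetCard m (univ : Finset V)).filter fun M => (G.induce (M : Set V)).Colorable 2

lemma badM_le_badP (a b : ℕ) :
    (badM G (a + 2*b)).card * (a + 2*b).factorial ≤ (badP G a b).card := by
  classical
  set m := a + 2*b with hm
  set TS : Finset V → Finset ((Fin a → V) × (Fin b → V × V)) :=
    fun S => (badP G a b).filter (fun p => imgP p = S) with hTS
  have hdisj : ∀ S ∈ badM G m, ∀ S' ∈ badM G m, S ≠ S' → Disjoint (TS S) (TS S') := by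
    intro S _ S' _ hne
    rw [Finset.disjoint_left]
    intro p hp hp'
    rw [hTS, Finset.mem_filter] at hp hp'
    exact hne (hp.2 ▸ hp'.2 ▸ rfl)
  have hsub : (badM G m).biUnion TS ⊆ badP G a b := by
    intro p hp
    rw [Finset.mem_biUnion] at hp
    obtain ⟨S, -, hp⟩ := hp
    exact (Finset.mem_filter.mp hp).1
  have hper : ∀ S ∈ badM G m, m.factorial ≤ (TS S).card := by
    intro S hS
    rw [badM, Finset.mem_filter, Finset.mem_powersetCard] at hS
    obtain ⟨⟨-, hcard⟩, hbip⟩ := hS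
    have hcardsub : Fintype.card {x // x ∈ S} = Fintype.card (Fin a ⊕ Fin b × Fin 2) := by
      simp [Fintype.card_coe, hcard, hm]
      ring
    obtain ⟨e₀⟩ := Fintype.card_eq.mp hcardsub.symm
    set Φ : ((Fin a ⊕ Fin b × Fin 2) ≃ {x // x ∈ S}) → ((Fin a → V) × (Fin b → V × V)) :=
      fun e => (fun i => (e (Sum.inl i)).1,
        fun j => ((e (Sum.inr (j, 0))).1, (e (Sum.inr (j, 1))).1)) with hΦ
    have himg : ∀ e, imgP (Φ e) = S := by
      intro e
      apply Finset.Subset.antisymm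
      · intro v hv
        simp only [imgP, Finset.mem_union, Finset.mem_image] at hv
        rcases hv with (⟨i, -, rfl⟩ | ⟨j, -, rfl⟩) | ⟨j, -, rfl⟩ <;> exact Subtype.mem _
      · intro s hs
        have : e (e.symm ⟨s, hs⟩) = ⟨s, hs⟩ := e.apply_symm_apply _
        rcases hk : e.symm ⟨s, hs⟩ with i | ⟨j, c⟩
        · have : s = ((Φ e).1 i) := by
            rw [hΦ]; simp only []
            rw [hk] at this
            exact congrArg Subtype.val this.symm
          rw [this]
          exact mem_imgP_fst _ _
        · rw [hk] at this
          fin_cases c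
          · have h2 : s = ((Φ e).2 j).1 := by
              rw [hΦ]; exact congrArg Subtype.val this.symm
            rw [h2]; exact mem_imgP_pair1 _ _
          · have h2 : s = ((Φ e).2 j).2 := by
              rw [hΦ]; exact congrArg Subtype.val this.symm
            rw [h2]; exact mem_imgP_pair2 _ _
    have hmaps : ∀ e, Φ e ∈ TS S := by
      intro e
      rw [hTS, Finset.mem_filter, badP, Finset.mem_filter]
      refine ⟨⟨Finset.mem_univ _, ?_⟩, himg e⟩
      rw [himg e]
      exact hbip
    have hinj : Function.Injective Φ := by
      intro e e' heq
      rw [hΦ] at heq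
      apply Equiv.ext
      intro k
      rcases k with i | ⟨j, c⟩
      · apply Subtype.ext
        exact congrFun (congrArg Prod.fst heq) i
      · fin_cases c
        · apply Subtype.ext
          exact congrArg Prod.fst (congrFun (congrArg Prod.snd heq) j)
        · apply Subtype.ext
          exact congrArg Prod.snd (congrFun (congrArg Prod.snd heq) j)
    have hcards : Fintype.card ((Fin a ⊕ Fin b × Fin 2) ≃ {x // x ∈ S}) ≤ (TS S).card := by
      rw [← Finset.card_univ]
      exact Finset.card_le_card_of_injOn Φ (fun e _ => hmaps e) (hinj.injOn)
    have hfact : Fintype.card ((Fin a ⊕ Fin b × Fin 2) ≃ {x // x ∈ S}) = m.factorial := by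
      rw [Fintype.card_equiv e₀]
      simp [hm]
      congr 1
      ring
    omega
  calc (badM G m).card * m.factorial = ∑ _S ∈ badM G m, m.factorial := by rw [Finset.sum_const, smul_eq_mul, mul_comm]
    _ ≤ ∑ S ∈ badM G m, (TS S).card := Finset.sum_le_sum hper
    _ = ((badM G m).biUnion TS).card := (Finset.card_biUnion hdisj).symm
    _ ≤ (badP G a b).card := Finset.card_le_card hsub


lemma descFactorial_ge (n m : ℕ) : (n - m)^m ≤ n.descFactorial m := by
  induction m with
  | zero => simp
  | succ k ih =>
      rw [Nat.descFactorial_succ, pow_succ]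
      have h1 : (n - (k+1))^k ≤ (n - k)^k :=
        Nat.pow_le_pow_left (Nat.sub_le_sub_left (Nat.le_succ k) n) k
      have h2 : n - (k+1) ≤ n - k := Nat.sub_le_sub_left (Nat.le_succ k) n
      calc (n - (k+1))^k * (n - (k+1)) ≤ n.descFactorial k * (n - k) :=
            Nat.mul_le_mul (h1.trans ih) h2
        _ = (n - k) * n.descFactorial k := Nat.mul_comm _ _

lemma pow_le_two_mul_descFactorial {n m : ℕ} (hm : 1 ≤ m) (hnm : 2 * m^2 ≤ n) :
    ((n : ℝ))^m ≤ 2 * (n.descFactorial m : ℝ) := by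
  have hmn : m ≤ n := le_trans (by nlinarith) hnm
  have hn0 : 0 < n := lt_of_lt_of_le (by positivity) hnm
  have hnR : (0:ℝ) < n := by exact_mod_cast hn0
  have key : ((n:ℝ))^m ≤ 2 * ((n - m : ℕ) : ℝ)^m := by
    rw [Nat.cast_sub hmn]
    have hb : (1 : ℝ) - (m:ℝ)/(n:ℝ) = ((n:ℝ) - m)/n := by field_simp
    have hber : (1:ℝ) - (m:ℝ)^2/(n:ℝ) ≤ ((1:ℝ) - (m:ℝ)/(n:ℝ))^m := by
      have := one_add_mul_le_pow (a := -((m:ℝ)/(n:ℝ))) (by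
        have hc : (m:ℝ) ≤ (n:ℝ) := by exact_mod_cast hmn
        have : (m:ℝ)/(n:ℝ) ≤ 2 := by
          rw [div_le_iff₀ hnR]
          nlinarith
        linarith) m
      calc (1:ℝ) - (m:ℝ)^2/(n:ℝ) = 1 + (m:ℝ) * (-((m:ℝ)/(n:ℝ))) := by ring
        _ ≤ (1 + -((m:ℝ)/(n:ℝ)))^m := this
        _ = ((1:ℝ) - (m:ℝ)/(n:ℝ))^m := by ring_nf
    have hhalf : (1:ℝ)/2 ≤ (1:ℝ) - (m:ℝ)^2/(n:ℝ) := by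
      have h2 : (2:ℝ) * (m:ℝ)^2 ≤ (n:ℝ) := by exact_mod_cast hnm
      have h3 : (m:ℝ)^2/(n:ℝ) ≤ 1/2 := by
        rw [div_le_iff₀ hnR]
        nlinarith
      linarith
    have hfin : (1:ℝ)/2 ≤ ((1:ℝ) - (m:ℝ)/(n:ℝ))^m := le_trans hhalf hber
    have hexp : ((n:ℝ) - m)^m = ((1:ℝ) - (m:ℝ)/(n:ℝ))^m * (n:ℝ)^m := by
      rw [← mul_pow]
      congr 1
      field_simp
    rw [hexp]
    nlinarith [pow_pos hnR m, hfin, pow_nonneg (le_of_lt hnR) m]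
  refine key.trans ?_
  have := descFactorial_ge n m
  have : (((n - m)^m : ℕ) : ℝ) ≤ (n.descFactorial m : ℝ) := by exact_mod_cast this
  push_cast at this ⊢
  nlinarith [this]


lemma badM_card_le {ε : ℝ} (hε0 : 0 < ε) (hε2 : ε ≤ 1/2) (hfar : FarFromBipartite ε G)
    (a b : ℕ) (ha1 : 1 ≤ a)
    (ha : (4/ε) * (1 - ε/2)^a ≤ ε/8) (hb : (2:ℝ)^a * (1 - ε/2)^b ≤ ε/8)
    (hn : 2 * (a+2*b)^2 ≤ Fintype.card V) :
    ((badM G (a+2*b)).card : ℝ) ≤ (ε/2) * ((Fintype.card V).choose (a+2*b) : ℝ) := by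
  classical
  set n := Fintype.card V with hn'
  set m := a + 2*b with hm
  have hm1 : 1 ≤ m := by omega
  have hn0 : 0 < n := by nlinarith
  have h1 := badM_le_badP G a b
  have h2 := badP_card_le G hε0 hε2 hfar hn0 a b ha hb
  have h3 := pow_le_two_mul_descFactorial hm1 hn
  have h4 : (n.descFactorial m : ℝ) = (m.factorial : ℝ) * (n.choose m : ℝ) := by
    exact_mod_cast congrArg (Nat.cast : ℕ → ℝ) (Nat.descFactorial_eq_factorial_mul_choose n m)
  have hc1 : ((badM G m).card : ℝ) * (m.factorial : ℝ) ≤ (ε/4) * (n:ℝ)^m := by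
    refine le_trans ?_ h2
    exact_mod_cast h1
  have hc2 : ((badM G m).card : ℝ) * (m.factorial : ℝ) ≤
      (ε/2) * ((n.choose m : ℝ) * (m.factorial : ℝ)) := by
    calc ((badM G m).card : ℝ) * (m.factorial : ℝ) ≤ (ε/4) * (n:ℝ)^m := hc1
      _ ≤ (ε/4) * (2 * (n.descFactorial m : ℝ)) :=
          mul_le_mul_of_nonneg_left h3 (by linarith)
      _ = (ε/2) * ((n.choose m : ℝ) * (m.factorial : ℝ)) := by rw [h4]; ring
  have hfpos : (0:ℝ) < (m.factorial : ℝ) := by exact_mod_cast m.factorial_pos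
  have := le_of_mul_le_mul_right (by linarith [hc2] :
    ((badM G m).card : ℝ) * (m.factorial : ℝ) ≤ ((ε/2) * (n.choose m : ℝ)) * (m.factorial : ℝ)) hfpos
  exact this

lemma badM_boost (m₁ m : ℕ) (h1 : m₁ ≤ m) (hmn : m ≤ Fintype.card V) :
    (badM G m).card * (m.choose m₁) ≤
      (badM G m₁).card * ((Fintype.card V - m₁).choose (m - m₁)) := by
  classical
  set n := Fintype.card V with hn'
  set Q := (badM G m).sigma (fun T => Finset.powersetCard m₁ T) with hQ
  set Q' := (badM G m₁).sigma (fun S => Finset.powersetCard (m - m₁) (univ \ S)) with hQ'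
  have hTcard : ∀ T ∈ badM G m, T.card = m := by
    intro T hT
    have := (Finset.mem_powersetCard.mp (Finset.mem_filter.mp hT).1).2
    exact this
  have hQcard : Q.card = (badM G m).card * m.choose m₁ := by
    rw [hQ, Finset.card_sigma]
    rw [Finset.sum_congr rfl (fun T hT => by
      rw [Finset.card_powersetCard, hTcard T hT])]
    rw [Finset.sum_const, smul_eq_mul]
  have hScard : ∀ S ∈ badM G m₁, S.card = m₁ := by
    intro S hS
    exact (Finset.mem_powersetCard.mp (Finset.mem_filter.mp hS).1).2
  have hQ'card : Q'.card = (badM G m₁).card * (n - m₁).choose (m - m₁) := by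
    rw [hQ', Finset.card_sigma]
    rw [Finset.sum_congr rfl (fun S hS => by
      rw [Finset.card_powersetCard, Finset.card_sdiff_of_subset (Finset.subset_univ _),
        Finset.card_univ, hScard S hS])]
    rw [Finset.sum_const, smul_eq_mul]
  rw [← hQcard, ← hQ'card]
  apply Finset.card_le_card_of_injOn (fun TS => ⟨TS.2, TS.1 \ TS.2⟩)
  · rintro ⟨T, S⟩ hTS
    rw [hQ, Finset.mem_coe, Finset.mem_sigma] at hTS
    obtain ⟨hT, hS⟩ := hTS
    rw [Finset.mem_powersetCard] at hS
    obtain ⟨hST, hSc⟩ := hS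
    rw [hQ', Finset.mem_coe, Finset.mem_sigma]
    constructor
    · rw [badM, Finset.mem_filter]
      refine ⟨Finset.mem_powersetCard.mpr ⟨Finset.subset_univ _, hSc⟩, ?_⟩
      exact induce_colorable_mono G hST (Finset.mem_filter.mp hT).2
    · rw [Finset.mem_powersetCard]
      constructor
      · intro x hx
        rw [Finset.mem_sdiff] at hx ⊢
        exact ⟨Finset.mem_univ _, hx.2⟩
      · rw [Finset.card_sdiff_of_subset hST, hTcard T hT, hSc]
  · rintro ⟨T, S⟩ hTS ⟨T', S'⟩ hTS' heq
    simp only [Finset.mem_coe, hQ, Finset.mem_sigma, Finset.mem_powersetCard] at hTS hTS'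
    have hSS : S = S' := congrArg Sigma.fst heq
    have hdiff : T \ S = T' \ S' := by
      have := congrArg Sigma.snd heq
      simpa using this
    have hT : T = T' := by
      calc T = S ∪ (T \ S) := (Finset.union_sdiff_of_subset hTS.2.1).symm
        _ = S' ∪ (T' \ S') := by rw [hdiff, hSS]
        _ = T' := Finset.union_sdiff_of_subset hTS'.2.1
    simp [hT, hSS]


end Stmt13Aux

open Stmt13Aux in
/-- Alon–Shapira–Sudakov corollary: if `G` is `ε`-far from bipartite then at
least `(1 - ε/2)·C(n,m)` of its `m`-vertex induced subgraphs are non-bipartite. -/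
theorem stmt13 : ∀ ε : ℝ, 0 < ε → ∃ m : ℕ, 0 < m ∧ ∀ n : ℕ, m ≤ n →
    ∀ G : SimpleGraph (Fin n), FarFromBipartite ε G →
    (1 - ε / 2) * (n.choose m : ℝ) ≤
      (((Finset.powersetCard m (Finset.univ : Finset (Fin n))).filter
        (fun M : Finset (Fin n) => ¬ (G.induce (M : Set (Fin n))).Colorable 2)).card : ℝ) := by
  intro ε hε
  set ε' := min ε (1/2) with hε'def
  have hε'0 : 0 < ε' := lt_min hε (by norm_num)
  have hε'2 : ε' ≤ 1/2 := min_le_right _ _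
  have hε'ε : ε' ≤ ε := min_le_left _ _
  have hb0 : (0:ℝ) ≤ 1 - ε'/2 := by linarith
  have hb1 : 1 - ε'/2 < 1 := by linarith
  obtain ⟨a₀, ha₀⟩ := exists_pow_lt_of_lt_one (show (0:ℝ) < ε'^2/32 by positivity) hb1
  set a := a₀ + 1 with hadef
  have hpa : (1 - ε'/2)^a ≤ ε'^2/32 :=
    le_of_lt (lt_of_le_of_lt (pow_le_pow_of_le_one hb0 (by linarith) (Nat.le_succ a₀)) ha₀)
  have ha : (4/ε') * (1 - ε'/2)^a ≤ ε'/8 := by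
    have h := mul_le_mul_of_nonneg_left hpa (le_of_lt (by positivity : (0:ℝ) < 4/ε'))
    calc (4/ε') * (1 - ε'/2)^a ≤ (4/ε') * (ε'^2/32) := h
      _ = ε'/8 := by field_simp; ring
  obtain ⟨b, hbb⟩ := exists_pow_lt_of_lt_one
    (show (0:ℝ) < (ε'/8)/2^a by positivity) hb1
  have hb : (2:ℝ)^a * (1 - ε'/2)^b ≤ ε'/8 := by
    have h2a : (0:ℝ) < 2^a := by positivity
    have := mul_le_mul_of_nonneg_left (le_of_lt hbb) (le_of_lt h2a)
    calc (2:ℝ)^a * (1 - ε'/2)^b ≤ (2:ℝ)^a * ((ε'/8)/2^a) := this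
      _ = ε'/8 := by field_simp
  set m₁ := a + 2*b with hm₁def
  have hm₁1 : 1 ≤ m₁ := by omega
  set m := 2 * m₁^2 with hmdef
  have hm₁m : m₁ ≤ m := by
    rw [hmdef]
    nlinarith [hm₁1]
  have hm0 : 0 < m := by positivity
  refine ⟨m, hm0, ?_⟩
  intro n hmn G hfarG
  have hcardfin : Fintype.card (Fin n) = n := Fintype.card_fin n
  have hfar' : FarFromBipartite ε' G := by
    intro H hH hc
    have h1 := hfarG H hH hc
    have h2 : ε' * (Fintype.card (Fin n) : ℝ)^2 ≤ ε * (Fintype.card (Fin n) : ℝ)^2 :=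
      mul_le_mul_of_nonneg_right hε'ε (by positivity)
    linarith
  have hsmall : ((badM G m₁).card : ℝ) ≤ (ε'/2) * ((n.choose m₁ : ℕ) : ℝ) := by
    have := badM_card_le G hε'0 hε'2 hfar' a b (by omega) ha hb
      (by rw [hcardfin]; exact hmn)
    rwa [hcardfin] at this
  have hboost := badM_boost G m₁ m hm₁m (by rw [hcardfin]; exact hmn)
  rw [hcardfin] at hboost
  have hcpos : 0 < m.choose m₁ := Nat.choose_pos hm₁m
  have hcposR : (0:ℝ) < (m.choose m₁ : ℝ) := by exact_mod_cast hcpos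
  have hmul : (n.choose m : ℕ) * m.choose m₁ = n.choose m₁ * (n - m₁).choose (m - m₁) :=
    Nat.choose_mul hm₁m
  have hbadm : ((badM G m).card : ℝ) ≤ (ε'/2) * ((n.choose m : ℕ) : ℝ) := by
    have hchain : ((badM G m).card : ℝ) * (m.choose m₁ : ℝ) ≤
        ((ε'/2) * ((n.choose m : ℕ) : ℝ)) * (m.choose m₁ : ℝ) := by
      calc ((badM G m).card : ℝ) * (m.choose m₁ : ℝ)
          ≤ ((badM G m₁).card : ℝ) * ((n - m₁).choose (m - m₁) : ℝ) := by exact_mod_cast hboost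
        _ ≤ ((ε'/2) * ((n.choose m₁ : ℕ) : ℝ)) * ((n - m₁).choose (m - m₁) : ℝ) :=
            mul_le_mul_of_nonneg_right hsmall (by positivity)
        _ = (ε'/2) * (((n.choose m₁ : ℕ) : ℝ) * ((n - m₁).choose (m - m₁) : ℝ)) := by ring
        _ = (ε'/2) * (((n.choose m : ℕ) : ℝ) * (m.choose m₁ : ℝ)) := by
            congr 1
            exact_mod_cast congrArg (Nat.cast : ℕ → ℝ) hmul.symm
        _ = ((ε'/2) * ((n.choose m : ℕ) : ℝ)) * (m.choose m₁ : ℝ) := by ring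
    exact le_of_mul_le_mul_right hchain hcposR
  -- final accounting
  have hsplit := Finset.card_filter_add_card_filter_not
    (s := Finset.powersetCard m (Finset.univ : Finset (Fin n)))
    (p := fun M : Finset (Fin n) => (G.induce (M : Set (Fin n))).Colorable 2)
  have hPcard : (Finset.powersetCard m (Finset.univ : Finset (Fin n))).card = n.choose m := by
    rw [Finset.card_powersetCard, Finset.card_univ, hcardfin]
  have hbadeq : ((Finset.powersetCard m (Finset.univ : Finset (Fin n))).filter
      (fun M : Finset (Fin n) => (G.induce (M : Set (Fin n))).Colorable 2)) = badM G m := rfl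
  have hnonbip : (((Finset.powersetCard m (Finset.univ : Finset (Fin n))).filter
      (fun M : Finset (Fin n) => ¬ (G.induce (M : Set (Fin n))).Colorable 2)).card : ℝ)
      = ((n.choose m : ℕ) : ℝ) - ((badM G m).card : ℝ) := by
    rw [hbadeq, hPcard] at hsplit
    have := congrArg (Nat.cast : ℕ → ℝ) hsplit
    push_cast at this ⊢
    linarith
  rw [hnonbip]
  have hCnn : (0:ℝ) ≤ ((n.choose m : ℕ) : ℝ) := by positivity
  nlinarith [hbadm, hCnn]
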